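/- Let v be an even-weight codeword of a binary linear code C that is not a zero neighbor in C. Then v is a zero neighbor in the even weight subcode C_even if and only if v is only-odd-decomposable in C. -/

import Mathlib

open Finset

/-- Support of a binary vector: the set of nonzero coordinates. -/
def supp {n : ℕ} (v : Fin n → ZMod 2) : Finset (Fin n) :=
  Finset.univ.filter fun i => v i ≠ 0

/-- Hamming weight. -/
def wt {n : ℕ} (v : Fin n → ZMod 2) : ℕ := (supp v).card

/-- A nonzero codeword of `D` is a zero neighbor (minimal codeword) if no nonzero
codeword of `D` has support strictly contained in its support. -/
def IsZeroNeighbor {n : ℕ} (D : Set (Fin n → ZMod 2)) (v : Fin n → ZMod 2) : Prop :=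
  v ∈ D ∧ v ≠ 0 ∧ ∀ v' ∈ D, v' ≠ 0 → ¬ supp v' ⊂ supp v

/-- `v` is decomposable in `D` if it is the sum of two nonzero codewords of `D`
with disjoint supports. -/
def Decomposable {n : ℕ} (D : Set (Fin n → ZMod 2)) (v : Fin n → ZMod 2) : Prop :=
  ∃ v1 v2, v1 ∈ D ∧ v2 ∈ D ∧ v1 ≠ 0 ∧ v2 ≠ 0 ∧
    Disjoint (supp v1) (supp v2) ∧ v = v1 + v2

/-- Extension of a vector by its overall parity bit. -/
def extVec {n : ℕ} (v : Fin n → ZMod 2) : Fin (n + 1) → ZMod 2 :=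
  Fin.snoc v (∑ i, v i)

/-- The extended code. -/
def extCode {n : ℕ} (C : Submodule (ZMod 2) (Fin n → ZMod 2)) :
    Set (Fin (n + 1) → ZMod 2) :=
  extVec '' (C : Set (Fin n → ZMod 2))

/-- An even-weight codeword is only-odd-decomposable if it is decomposable and in every
decomposition into nonzero disjoint-support codewords both parts have odd weight. -/
def OnlyOddDecomposable {n : ℕ} (C : Submodule (ZMod 2) (Fin n → ZMod 2))
    (v : Fin n → ZMod 2) : Prop :=
  Even (wt v) ∧ Decomposable (C : Set (Fin n → ZMod 2)) v ∧
    ∀ v1 v2, v1 ∈ C → v2 ∈ C → v1 ≠ 0 → v2 ≠ 0 →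
      Disjoint (supp v1) (supp v2) → v = v1 + v2 → Odd (wt v1) ∧ Odd (wt v2)

/-- `L_w(D)`: the number of zero neighbors of weight `w` in `D`. -/
noncomputable def Lw {n : ℕ} (D : Set (Fin n → ZMod 2)) (w : ℕ) : ℕ :=
  {v : Fin n → ZMod 2 | IsZeroNeighbor D v ∧ wt v = w}.ncard

/-- `N_w(C)`: the number of only-odd-decomposable codewords of weight `w` in `C`. -/
noncomputable def Nw {n : ℕ} (C : Submodule (ZMod 2) (Fin n → ZMod 2)) (w : ℕ) : ℕ :=
  {v : Fin n → ZMod 2 | v ∈ C ∧ OnlyOddDecomposable C v ∧ wt v = w}.ncard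

/-- Action of a coordinate permutation on a vector. -/
def permVec {n : ℕ} (π : Equiv.Perm (Fin n)) (v : Fin n → ZMod 2) : Fin n → ZMod 2 :=
  v ∘ π.symm

/-- `π` is an automorphism of the code `D`. -/
def IsAut {n : ℕ} (D : Set (Fin n → ZMod 2)) (π : Equiv.Perm (Fin n)) : Prop :=
  permVec π '' D = D

/-- The even weight subcode of `C`, as a set. -/
def evenSub {n : ℕ} (C : Submodule (ZMod 2) (Fin n → ZMod 2)) :
    Set (Fin n → ZMod 2) :=
  {v : Fin n → ZMod 2 | v ∈ C ∧ Even (wt v)}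

lemma zmod2_cases (a : ZMod 2) : a = 0 ∨ a = 1 := by revert a; decide

lemma supp_zero_iff {n : ℕ} {v : Fin n → ZMod 2} : supp v = ∅ ↔ v = 0 := by
  constructor
  · intro h
    funext i
    by_contra hi
    have hi' : v i ≠ 0 := by simpa using hi
    have : i ∈ supp v := Finset.mem_filter.mpr ⟨Finset.mem_univ i, hi'⟩
    simp [h] at this
  · intro h
    subst h
    simp [supp]

lemma supp_add_disj {n : ℕ} {a b : Fin n → ZMod 2}
    (h : Disjoint (supp a) (supp b)) : supp (a + b) = supp a ∪ supp b := by
  ext i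
  simp only [supp, Finset.mem_filter, Finset.mem_union, Finset.mem_univ, true_and,
    Pi.add_apply]
  have hd : ¬(a i ≠ 0 ∧ b i ≠ 0) := by
    rintro ⟨h1, h2⟩
    exact (Finset.disjoint_left.mp h (Finset.mem_filter.mpr ⟨Finset.mem_univ i, h1⟩))
      (Finset.mem_filter.mpr ⟨Finset.mem_univ i, h2⟩)
  rcases zmod2_cases (a i) with h1 | h1 <;> rcases zmod2_cases (b i) with h2 | h2 <;>
    simp [h1, h2] at hd ⊢ <;> decide

lemma wt_add_disj {n : ℕ} {a b : Fin n → ZMod 2}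
    (h : Disjoint (supp a) (supp b)) : wt (a + b) = wt a + wt b := by
  rw [wt, supp_add_disj h, Finset.card_union_of_disjoint h]; rfl

lemma supp_add_of_subset {n : ℕ} {a v : Fin n → ZMod 2}
    (h : supp a ⊆ supp v) : supp (v + a) = supp v \ supp a := by
  ext i
  simp only [supp, Finset.mem_filter, Finset.mem_sdiff, Finset.mem_univ, true_and,
    Pi.add_apply]
  rcases zmod2_cases (a i) with h1 | h1
  · simp [h1]
  · have hvi : v i = 1 := by
      have : i ∈ supp v := h (by simp [supp, h1])
      simp only [supp, Finset.mem_filter] at this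
      rcases zmod2_cases (v i) with h2 | h2
      · exact absurd h2 this.2
      · exact h2
    simp [h1, hvi]
    decide

lemma char2_add {n : ℕ} (a b : Fin n → ZMod 2) : a + (b + a) = b := by
  funext i
  have : ∀ x y : ZMod 2, x + (y + x) = y := by decide
  exact this (a i) (b i)

/-- Given a strict subsupport codeword `w` of `v`, we get a decomposition `v = w + (v + w)`. -/
lemma decomp_of_ssubset {n : ℕ} (C : Submodule (ZMod 2) (Fin n → ZMod 2))
    {v w : Fin n → ZMod 2} (hv : v ∈ C) (hwC : w ∈ C) (hw0 : w ≠ 0)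
    (hss : supp w ⊂ supp v) :
    (v + w) ∈ C ∧ (v + w) ≠ 0 ∧ Disjoint (supp w) (supp (v + w)) ∧ v = w + (v + w) := by
  have huC : (v + w) ∈ C := C.add_mem hv hwC
  have hsupp : supp (v + w) = supp v \ supp w := supp_add_of_subset hss.subset
  have hu0 : (v + w) ≠ 0 := by
    intro h0
    obtain ⟨i, hiv, hiw⟩ := Finset.exists_of_ssubset hss
    have hmem : i ∈ supp (v + w) := hsupp ▸ Finset.mem_sdiff.mpr ⟨hiv, hiw⟩
    rw [supp_zero_iff.mpr h0] at hmem
    exact absurd hmem (Finset.notMem_empty i)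
  have hdisj : Disjoint (supp w) (supp (v + w)) := by
    rw [hsupp]; exact Finset.disjoint_sdiff
  exact ⟨huC, hu0, hdisj, (char2_add w v).symm⟩

theorem even_subcode_zero_neighbor_iff {n : ℕ}
    (C : Submodule (ZMod 2) (Fin n → ZMod 2)) (v : Fin n → ZMod 2)
    (hv : v ∈ C) (heven : Even (wt v))
    (hnzn : ¬ IsZeroNeighbor (C : Set (Fin n → ZMod 2)) v) :
    IsZeroNeighbor (evenSub C) v ↔ OnlyOddDecomposable C v := by
  by_cases hv0 : v = 0
  · subst hv0
    constructor
    · rintro ⟨_, h0, _⟩; exact absurd rfl h0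
    · rintro ⟨_, ⟨v1, v2, _, _, hv1, hv2, hdisj, hsum⟩, _⟩
      have h1 : supp v1 ∪ supp v2 = (∅ : Finset (Fin n)) := by
        rw [← supp_add_disj hdisj, ← hsum, supp_zero_iff.mpr rfl]
      have : supp v1 = ∅ := by
        rcases Finset.union_eq_empty.mp h1 with ⟨h, _⟩
        exact h
      exact (hv1 (supp_zero_iff.mp this)).elim
  · obtain ⟨w, hwC, hw0, hss⟩ : ∃ w, w ∈ C ∧ w ≠ 0 ∧ supp w ⊂ supp v := by
      unfold IsZeroNeighbor at hnzn
      push_neg at hnzn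
      obtain ⟨w, hwC, hw0, hss⟩ := hnzn hv hv0
      exact ⟨w, hwC, hw0, hss⟩
    obtain ⟨huC, hu0, hdisj, hsum⟩ := decomp_of_ssubset C hv hwC hw0 hss
    constructor
    · rintro ⟨_, _, hmin⟩
      refine ⟨heven, ⟨w, v + w, hwC, huC, hw0, hu0, hdisj, hsum⟩, ?_⟩
      intro v1 v2 h1C h2C h10 h20 hd hs
      have key : ∀ a b : Fin n → ZMod 2, a ∈ C → a ≠ 0 → b ≠ 0 →
          Disjoint (supp a) (supp b) → v = a + b → ¬ Even (wt a) := by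
        intro a b haC ha0 hb0 hdab hvab hevena
        have hssub : supp a ⊂ supp v := by
          rw [hvab, supp_add_disj hdab]
          refine Finset.ssubset_iff_of_subset Finset.subset_union_left |>.mpr ?_
          obtain ⟨i, hib⟩ := Finset.nonempty_iff_ne_empty.mpr
            (fun h => hb0 (supp_zero_iff.mp h))
          exact ⟨i, Finset.mem_union_right _ hib, Finset.disjoint_right.mp hdab hib⟩
        exact hmin a ⟨haC, hevena⟩ ha0 hssub
      have h1 : ¬ Even (wt v1) := key v1 v2 h1C h10 h20 hd hs
      have h2 : ¬ Even (wt v2) := key v2 v1 h2C h20 h10 hd.symm (by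
        rw [hs, add_comm])
      exact ⟨Nat.not_even_iff_odd.mp h1, Nat.not_even_iff_odd.mp h2⟩
    · rintro ⟨_, _, hodd⟩
      refine ⟨⟨hv, heven⟩, hv0, ?_⟩
      rintro u ⟨huC', hueven⟩ hu0' hsu
      obtain ⟨hxC, hx0, hxdisj, hxsum⟩ := decomp_of_ssubset C hv huC' hu0' hsu
      have := (hodd u (v + u) huC' hxC hu0' hx0 hxdisj hxsum).1
      exact (Nat.not_odd_iff_even.mpr hueven) this
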